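/- Every 2-coloring of the edges of K_{2,2,3} (the complete tripartite graph with parts of sizes 2,2,3) contains a copy of J_3 = P_3 in color 1 or a copy of J_4 = K_4 minus an edge in color 2. That is, K_{2,2,3} edge-arrows (J_3, J_4). -/

import Mathlib

open SimpleGraph

/-- `Copies G F S`: `G` contains a copy of `F` all of whose vertices lie in `S`. -/
def Copies {α β : Type*} (G : SimpleGraph α) (F : SimpleGraph β) (S : Set α) : Prop :=
  ∃ f : β ↪ α, (∀ a b, F.Adj a b → G.Adj (f a) (f b)) ∧ ∀ a, f a ∈ S

/-- `G` vertex-arrows the family `F` of graphs. -/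
def VArrows {α : Type*} (G : SimpleGraph α) {r : ℕ} {β : Fin r → Type*}
    (F : ∀ i, SimpleGraph (β i)) : Prop :=
  ∀ C : α → Fin r, ∃ i, Copies G (F i) {v | C v = i}

/-- `G` vertex-arrows `(F1, F2)`. -/
def VArrows2 {α β γ : Type*} (G : SimpleGraph α) (F1 : SimpleGraph β) (F2 : SimpleGraph γ) :
    Prop :=
  ∀ C : α → Bool, Copies G F1 {v | C v = true} ∨ Copies G F2 {v | C v = false}

/-- `G` edge-arrows `(F1, F2)`: every red subgraph `R ≤ G` yields a red `F1` or a blue `F2`. -/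
def EArrows2 {α β γ : Type*} (G : SimpleGraph α) (F1 : SimpleGraph β) (F2 : SimpleGraph γ) :
    Prop :=
  ∀ R : SimpleGraph α, R ≤ G → Copies R F1 Set.univ ∨ Copies (G \ R) F2 Set.univ

/-- Vertex Folkman number for a family of target graphs. -/
noncomputable def Fv {r : ℕ} {β : Fin r → Type*} (F : ∀ i, SimpleGraph (β i)) (k : ℕ) : ℕ :=
  sInf {n | ∃ G : SimpleGraph (Fin n), G.CliqueFree k ∧ VArrows G F}

/-- Two-color vertex Folkman number. -/
noncomputable def Fv2 {β γ : Type*} (F1 : SimpleGraph β) (F2 : SimpleGraph γ) (k : ℕ) : ℕ :=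
  sInf {n | ∃ G : SimpleGraph (Fin n), G.CliqueFree k ∧ VArrows2 G F1 F2}

/-- Two-color edge Folkman number. -/
noncomputable def Fe2 {β γ : Type*} (F1 : SimpleGraph β) (F2 : SimpleGraph γ) (k : ℕ) : ℕ :=
  sInf {n | ∃ G : SimpleGraph (Fin n), G.CliqueFree k ∧ EArrows2 G F1 F2}

/-- Lexicographic product `G[H]`. -/
def lexProd {α β : Type*} (G : SimpleGraph α) (H : SimpleGraph β) : SimpleGraph (α × β) where
  Adj x y := G.Adj x.1 y.1 ∨ (x.1 = y.1 ∧ H.Adj x.2 y.2)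
  symm := ⟨by rintro x y (h | ⟨e, h⟩); exacts [Or.inl h.symm, Or.inr ⟨e.symm, h.symm⟩]⟩
  loopless := ⟨by rintro x (h | ⟨_, h⟩); exacts [G.irrefl h, H.irrefl h]⟩

/-- Complete graph on `k` vertices. -/
def Kc (k : ℕ) : SimpleGraph (Fin k) := completeGraph (Fin k)

/-- `J_k = K_k - e`: complete graph on `k` vertices minus one edge (the one
joining the two distinguished right-hand vertices). -/
def Jgraph (k : ℕ) : SimpleGraph (Fin (k - 2) ⊕ Fin 2) where
  Adj x y := x ≠ y ∧ ¬(x.isRight ∧ y.isRight)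
  symm := ⟨fun x y ⟨h1, h2⟩ => ⟨h1.symm, fun ⟨a, b⟩ => h2 ⟨b, a⟩⟩⟩
  loopless := ⟨fun x h => h.1 rfl⟩

/-- Cycle on `n` vertices. -/
def cycle (n : ℕ) : SimpleGraph (ZMod n) where
  Adj i j := i ≠ j ∧ (i - j = 1 ∨ j - i = 1)
  symm := ⟨fun i j ⟨h1, h2⟩ => ⟨h1.symm, h2.symm⟩⟩
  loopless := ⟨fun i h => h.1 rfl⟩

/-- Join of two graphs: disjoint union plus all cross edges. -/
def graphJoin {α β : Type*} (G : SimpleGraph α) (H : SimpleGraph β) :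
    SimpleGraph (α ⊕ β) where
  Adj x y := (∃ a b, x = .inl a ∧ y = .inl b ∧ G.Adj a b) ∨
             (∃ a b, x = .inr a ∧ y = .inr b ∧ H.Adj a b) ∨
             (x.isLeft ∧ y.isRight) ∨ (x.isRight ∧ y.isLeft)
  symm := ⟨by
    rintro x y (⟨a, b, rfl, rfl, h⟩ | ⟨a, b, rfl, rfl, h⟩ | ⟨h1, h2⟩ | ⟨h1, h2⟩)
    · exact Or.inl ⟨b, a, rfl, rfl, h.symm⟩
    · exact Or.inr (Or.inl ⟨b, a, rfl, rfl, h.symm⟩)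
    · exact Or.inr (Or.inr (Or.inr ⟨h2, h1⟩))
    · exact Or.inr (Or.inr (Or.inl ⟨h2, h1⟩))⟩
  loopless := ⟨by
    rintro x (⟨a, b, rfl, h, h'⟩ | ⟨a, b, rfl, h, h'⟩ | ⟨h1, h2⟩ | ⟨h1, h2⟩)
    · cases h; exact G.irrefl h'
    · cases h; exact H.irrefl h'
    · cases x <;> simp_all
    · cases x <;> simp_all⟩

/-- Clique number: the largest size of a clique. -/
noncomputable def cliqueNum' {α : Type*} (G : SimpleGraph α) : ℕ :=
  sSup {n | ∃ s : Finset α, G.IsNClique n s}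

lemma buildJ3 {α : Type*} (B : SimpleGraph α) {v u u' : α}
    (h1 : B.Adj v u) (h2 : B.Adj v u') (hne : u ≠ u') :
    Copies B (Jgraph 3) Set.univ := by
  have n1 := h1.ne; have n2 := h2.ne
  have s1 := h1.symm; have s2 := h2.symm
  refine ⟨⟨fun a => Sum.elim (fun _ : Fin 1 => v)
    (fun j : Fin 2 => if j = 0 then u else u') a, ?_⟩, ?_, fun _ => trivial⟩
  · rintro (a|a) (b|b) h <;> fin_cases a <;> fin_cases b <;> simp_all
  · rintro (a|a) (b|b) h <;> fin_cases a <;> fin_cases b <;> simp_all [Jgraph] <;> assumption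

lemma buildJ4 {α : Type*} (B : SimpleGraph α) {w x y z : α}
    (hwx : B.Adj w x) (hwy : B.Adj w y) (hwz : B.Adj w z)
    (hxy : B.Adj x y) (hxz : B.Adj x z) (hyz : y ≠ z) :
    Copies B (Jgraph 4) Set.univ := by
  have n1 := hwx.ne; have n2 := hwy.ne; have n3 := hwz.ne
  have n4 := hxy.ne; have n5 := hxz.ne
  have s1 := hwx.symm; have s2 := hwy.symm; have s3 := hwz.symm
  have s4 := hxy.symm; have s5 := hxz.symm
  refine ⟨⟨fun a => Sum.elim (fun i : Fin 2 => if i = 0 then w else x)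
    (fun j : Fin 2 => if j = 0 then y else z) a, ?_⟩, ?_, fun _ => trivial⟩
  · rintro (a|a) (b|b) h <;> fin_cases a <;> fin_cases b <;> simp_all
  · rintro (a|a) (b|b) h <;> fin_cases a <;> fin_cases b <;> simp_all [Jgraph] <;> assumption

/-- `K_{2,2,3} → (J_3, J_4)^e`. -/
theorem K223_edge_arrows :
    EArrows2 (completeMultipartiteGraph (fun i : Fin 3 => Fin (![2, 2, 3] i)))
      (Jgraph 3) (Jgraph 4) := by
  classical
  set G := completeMultipartiteGraph (fun i : Fin 3 => Fin (![2, 2, 3] i)) with hG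
  intro R hR
  by_cases h3 : Copies R (Jgraph 3) Set.univ
  · exact Or.inl h3
  refine Or.inr ?_
  -- R is a matching
  have mat : ∀ v u u', R.Adj v u → R.Adj v u' → u = u' := by
    intro v u u' hu hu'
    by_contra hne
    exact h3 (buildJ3 R hu hu' hne)
  -- vertices
  set A : Fin 2 → (i : Fin 3) × Fin (![2, 2, 3] i) := fun i => ⟨0, i⟩ with hA
  set Bv : Fin 2 → (i : Fin 3) × Fin (![2, 2, 3] i) := fun i => ⟨1, i⟩ with hB
  set Cc : Fin 3 → (i : Fin 3) × Fin (![2, 2, 3] i) := fun j => ⟨2, j⟩ with hC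
  have hGadj : ∀ u v : (i : Fin 3) × Fin (![2, 2, 3] i), u.1 ≠ v.1 → G.Adj u v :=
    fun u v h => h
  -- anyone is red-adjacent to at most one C vertex
  have pickC : ∀ v, ∃ k1 k2 : Fin 3, k1 ≠ k2 ∧ ¬R.Adj v (Cc k1) ∧ ¬R.Adj v (Cc k2) := by
    intro v
    have uniq : ∀ k k' : Fin 3, R.Adj v (Cc k) → R.Adj v (Cc k') → k = k' := by
      intro k k' h h'
      have := mat v (Cc k) (Cc k') h h'
      exact eq_of_heq (Sigma.mk.inj_iff.mp this).2
    by_cases h0 : R.Adj v (Cc 0)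
    · exact ⟨1, 2, by decide, fun h => by simpa using uniq 0 1 h0 h,
        fun h => by simpa using uniq 0 2 h0 h⟩
    by_cases h1 : R.Adj v (Cc 1)
    · exact ⟨0, 2, by decide, h0, fun h => by simpa using uniq 1 2 h1 h⟩
    · exact ⟨0, 1, by decide, h0, h1⟩
  -- main construction given a good pair
  have main : ∀ u o : (i : Fin 3) × Fin (![2, 2, 3] i), u.1 ≠ o.1 → u.1 ≠ 2 → o.1 ≠ 2 →
      ¬R.Adj u o → (¬∃ k, R.Adj u (Cc k)) → Copies (G \ R) (Jgraph 4) Set.univ := by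
    intro u o hne hu2 ho2 hRuo hMC
    obtain ⟨k1, k2, hk, ho1, ho2'⟩ := pickC o
    have hCC : ∀ k : Fin 3, (Cc k).1 = 2 := fun k => rfl
    refine buildJ4 (G \ R) (w := u) (x := o) (y := Cc k1) (z := Cc k2)
      ⟨hGadj _ _ hne, hRuo⟩
      ⟨hGadj _ _ (by rw [hCC]; exact hu2), fun h => hMC ⟨k1, h⟩⟩
      ⟨hGadj _ _ (by rw [hCC]; exact hu2), fun h => hMC ⟨k2, h⟩⟩
      ⟨hGadj _ _ (by rw [hCC]; exact ho2), ho1⟩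
      ⟨hGadj _ _ (by rw [hCC]; exact ho2), ho2'⟩
      (fun h => hk (eq_of_heq (Sigma.mk.inj_iff.mp h).2))
  -- find a good pair
  by_cases pair : ∃ i j : Fin 2, ¬R.Adj (A i) (Bv j) ∧
      ((¬∃ k, R.Adj (A i) (Cc k)) ∨ (¬∃ k, R.Adj (Bv j) (Cc k)))
  · obtain ⟨i, j, hnR, hcase⟩ := pair
    rcases hcase with h | h
    · exact main (A i) (Bv j) (show (0 : Fin 3) ≠ 1 by decide)
        (show (0 : Fin 3) ≠ 2 by decide) (show (1 : Fin 3) ≠ 2 by decide) hnR h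
    · exact main (Bv j) (A i) (show (1 : Fin 3) ≠ 0 by decide)
        (show (1 : Fin 3) ≠ 2 by decide) (show (0 : Fin 3) ≠ 2 by decide)
        (fun hh => hnR hh.symm) h
  · exfalso
    push_neg at pair
    -- every vertex of A ∪ B is red-matched into C
    have allMC : ∀ s : Fin 2 ⊕ Fin 2, ∃ k, R.Adj (Sum.elim A Bv s) (Cc k) := by
      rintro (i | j)
      · by_contra hMC
        simp only [Sum.elim_inl] at hMC
        have h0 : R.Adj (A i) (Bv 0) := by
          by_contra h; exact hMC (pair i 0 h).1
        have h1 : R.Adj (A i) (Bv 1) := by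
          by_contra h; exact hMC (pair i 1 h).1
        have := mat (A i) (Bv 0) (Bv 1) h0 h1
        simp [hB] at this
        have := eq_of_heq (Sigma.mk.inj_iff.mp this).2
        simp at this
      · by_contra hMC
        simp only [Sum.elim_inr] at hMC
        have h0 : R.Adj (A 0) (Bv j) := by
          by_contra h; exact hMC (pair 0 j h).2
        have h1 : R.Adj (A 1) (Bv j) := by
          by_contra h; exact hMC (pair 1 j h).2
        have := mat (Bv j) (A 0) (A 1) h0.symm h1.symm
        simp [hA] at this
        have := eq_of_heq (Sigma.mk.inj_iff.mp this).2
        simp at this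
    choose f hf using allMC
    obtain ⟨s, t, hst, heq⟩ := Fintype.exists_ne_map_eq_of_card_lt f (by simp)
    have h1 : R.Adj (Cc (f s)) (Sum.elim A Bv s) := (hf s).symm
    have h2 : R.Adj (Cc (f s)) (Sum.elim A Bv t) := by
      rw [heq]; exact (hf t).symm
    have := mat (Cc (f s)) _ _ h1 h2
    rcases s with i | i <;> rcases t with j | j <;>
      simp only [Sum.elim_inl, Sum.elim_inr, hA, hB] at this
    · exact hst (by rw [show i = j from eq_of_heq (Sigma.mk.inj_iff.mp this).2])
    · exact absurd (Sigma.mk.inj_iff.mp this).1 (by decide)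
    · exact absurd (Sigma.mk.inj_iff.mp this).1 (by decide)
    · exact hst (by rw [show i = j from eq_of_heq (Sigma.mk.inj_iff.mp this).2])
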